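/- The partial derivative of the moment map f(ψ,Λ) = ∫ G ψ (G*ΛG)^{-1} G* dθ/(2π) with respect to ψ, namely the linear operator δψ ↦ ∫ G δψ (G*ΛG)^{-1} G* dθ/(2π), depends continuously (in the operator norm) on (ψ,Λ) ∈ C₊(𝕋) × L₊^Γ, with the bound ‖f'_1(ψ,Λ_k) − f'_1(ψ,Λ)‖ ≤ n G_max² · sup_z ‖(G*Λ_k G)^{-1} − (G*ΛG)^{-1}‖_F. -/

import Mathlib

open Real Filter
open scoped Matrix ComplexOrder

attribute [local instance] Matrix.frobeniusSeminormedAddCommGroup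
  Matrix.frobeniusNormedAddCommGroup Matrix.frobeniusNormedSpace

lemma cont_matrix_inv {X : Type*} [TopologicalSpace X] {l : ℕ}
    {A : X → Matrix (Fin l) (Fin l) ℂ} (hA : Continuous A) (h : ∀ x, (A x).det ≠ 0) :
    Continuous fun x => (A x)⁻¹ := by
  simp only [Matrix.inv_def, Ring.inverse_eq_inv']
  exact (hA.matrix_det.inv₀ h).smul hA.matrix_adjugate

lemma inv_sub_inv_eq {l : ℕ} (A B : Matrix (Fin l) (Fin l) ℂ)
    (hA : IsUnit A.det) (hB : IsUnit B.det) :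
    A⁻¹ - B⁻¹ = A⁻¹ * (B - A) * B⁻¹ := by
  rw [Matrix.mul_sub, Matrix.sub_mul, Matrix.mul_assoc, Matrix.mul_nonsing_inv _ hB,
    Matrix.nonsing_inv_mul _ hA, Matrix.mul_one, Matrix.one_mul]

/-- The partial derivative of the moment map `f(ψ,Λ) = ∫ G ψ (G*ΛG)⁻¹ G* dθ/(2π)` in `ψ`:
the linear operator `δψ ↦ ∫ G δψ (G*ΛG)⁻¹ G* dθ/(2π)`. -/
noncomputable def f1deriv {n m : ℕ} (G : C(Circle, Matrix (Fin n) (Fin m) ℂ))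
    (Λ : Matrix (Fin n) (Fin n) ℂ) (δψ : C(Circle, ℝ)) : Matrix (Fin n) (Fin n) ℂ :=
  (2 * π)⁻¹ • ∫ θ in (-π)..π,
    δψ (Circle.exp θ) •
      (G (Circle.exp θ) * ((G (Circle.exp θ))ᴴ * Λ * G (Circle.exp θ))⁻¹ * (G (Circle.exp θ))ᴴ)

/-- The partial derivative `f'_1` of the moment map with respect to the prior depends
continuously (in the operator norm) on `(ψ, Λ)`, with the bound
`‖f'_1(ψ,Λ_k) − f'_1(ψ,Λ)‖ ≤ n G_max² · sup_z ‖(G*Λ_k G)⁻¹ − (G*ΛG)⁻¹‖_F`. -/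
theorem stmt_12 (n m : ℕ) (G : C(Circle, Matrix (Fin n) (Fin m) ℂ))
    (ψ : C(Circle, ℝ)) (hψ : ∀ z, 0 < ψ z)
    (Λseq : ℕ → Matrix (Fin n) (Fin n) ℂ) (Λ : Matrix (Fin n) (Fin n) ℂ)
    (hherm : ∀ k, (Λseq k).IsHermitian) (hΛherm : Λ.IsHermitian)
    (hposk : ∀ k (z : Circle), ((G z)ᴴ * Λseq k * G z).PosDef)
    (hpos : ∀ z : Circle, ((G z)ᴴ * Λ * G z).PosDef)
    (Gmax : ℝ) (hGmax : ∀ z, ‖G z‖ ≤ Gmax)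
    (hconv : Tendsto Λseq atTop (nhds Λ)) :
    (∀ k (δψ : C(Circle, ℝ)), ‖δψ‖ ≤ 1 →
        ‖f1deriv G (Λseq k) δψ - f1deriv G Λ δψ‖ ≤
          (n : ℝ) * Gmax ^ 2 *
            ⨆ z : Circle, ‖((G z)ᴴ * Λseq k * G z)⁻¹ - ((G z)ᴴ * Λ * G z)⁻¹‖) ∧
    (∀ ε > (0 : ℝ), ∀ᶠ k in atTop, ∀ δψ : C(Circle, ℝ), ‖δψ‖ ≤ 1 →
        ‖f1deriv G (Λseq k) δψ - f1deriv G Λ δψ‖ ≤ ε) := by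
  
  have hGm0 : 0 ≤ Gmax := le_trans (norm_nonneg _) (hGmax 1)
  -- continuity facts
  have hGc : Continuous fun z : Circle => G z := G.continuous
  have hAc : ∀ M : Matrix (Fin n) (Fin n) ℂ,
      Continuous fun z : Circle => (G z)ᴴ * M * G z :=
    fun M => ((hGc.matrix_conjTranspose.matrix_mul continuous_const).matrix_mul hGc)
  have hdetk : ∀ k (z : Circle), ((G z)ᴴ * Λseq k * G z).det ≠ 0 :=
    fun k z => (hposk k z).det_pos.ne'
  have hdet : ∀ z : Circle, ((G z)ᴴ * Λ * G z).det ≠ 0 := fun z => (hpos z).det_pos.ne'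
  have hAinvc : Continuous fun z : Circle => ((G z)ᴴ * Λ * G z)⁻¹ :=
    cont_matrix_inv (hAc Λ) hdet
  have hAinvkc : ∀ k, Continuous fun z : Circle => ((G z)ᴴ * Λseq k * G z)⁻¹ :=
    fun k => cont_matrix_inv (hAc (Λseq k)) (hdetk k)
  -- norm bound on G z * D * (G z)ᴴ
  have hGDG : ∀ (z : Circle) (D : Matrix (Fin m) (Fin m) ℂ),
      ‖G z * D * (G z)ᴴ‖ ≤ Gmax ^ 2 * ‖D‖ := by
    intro z D
    calc ‖G z * D * (G z)ᴴ‖ ≤ ‖G z * D‖ * ‖(G z)ᴴ‖ := Matrix.frobenius_norm_mul _ _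
      _ ≤ ‖G z‖ * ‖D‖ * ‖(G z)ᴴ‖ :=
        mul_le_mul_of_nonneg_right (Matrix.frobenius_norm_mul _ _) (norm_nonneg _)
      _ = ‖G z‖ * ‖G z‖ * ‖D‖ := by rw [Matrix.frobenius_norm_conjTranspose]; ring
      _ ≤ Gmax * Gmax * ‖D‖ :=
        mul_le_mul_of_nonneg_right
          (mul_le_mul (hGmax z) (hGmax z) (norm_nonneg _) hGm0) (norm_nonneg _)
      _ = Gmax ^ 2 * ‖D‖ := by ring
  -- Part 1
  have part1 : ∀ k (δψ : C(Circle, ℝ)), ‖δψ‖ ≤ 1 →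
      ‖f1deriv G (Λseq k) δψ - f1deriv G Λ δψ‖ ≤
        (n : ℝ) * Gmax ^ 2 *
          ⨆ z : Circle, ‖((G z)ᴴ * Λseq k * G z)⁻¹ - ((G z)ᴴ * Λ * G z)⁻¹‖ := by
    intro k δψ hδψ
    set S := ⨆ z : Circle, ‖((G z)ᴴ * Λseq k * G z)⁻¹ - ((G z)ᴴ * Λ * G z)⁻¹‖ with hS
    have hS0 : 0 ≤ S := Real.iSup_nonneg fun z => norm_nonneg _
    rcases Nat.eq_zero_or_pos n with hn | hn
    · subst hn
      have hz : f1deriv G (Λseq k) δψ - f1deriv G Λ δψ = 0 :=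
        Matrix.ext fun i => i.elim0
      rw [hz, norm_zero]
      positivity
    have hnormc : Continuous fun z : Circle =>
        ‖((G z)ᴴ * Λseq k * G z)⁻¹ - ((G z)ᴴ * Λ * G z)⁻¹‖ :=
      ((hAinvkc k).sub hAinvc).norm
    have hbdd : BddAbove (Set.range fun z : Circle =>
        ‖((G z)ᴴ * Λseq k * G z)⁻¹ - ((G z)ᴴ * Λ * G z)⁻¹‖) :=
      (isCompact_range hnormc).bddAbove
    have hSle : ∀ z : Circle,
        ‖((G z)ᴴ * Λseq k * G z)⁻¹ - ((G z)ᴴ * Λ * G z)⁻¹‖ ≤ S :=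
      fun z => le_ciSup hbdd z
    -- integrands
    set Fk : ℝ → Matrix (Fin n) (Fin n) ℂ := fun θ =>
      δψ (Circle.exp θ) •
        (G (Circle.exp θ) * ((G (Circle.exp θ))ᴴ * Λseq k * G (Circle.exp θ))⁻¹ *
          (G (Circle.exp θ))ᴴ) with hFk
    set F : ℝ → Matrix (Fin n) (Fin n) ℂ := fun θ =>
      δψ (Circle.exp θ) •
        (G (Circle.exp θ) * ((G (Circle.exp θ))ᴴ * Λ * G (Circle.exp θ))⁻¹ *
          (G (Circle.exp θ))ᴴ) with hF
    have hFkc : Continuous Fk := by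
      apply Continuous.smul (δψ.continuous.comp Circle.exp.continuous)
      exact ((hGc.matrix_mul (hAinvkc k)).matrix_mul hGc.matrix_conjTranspose).comp
        Circle.exp.continuous
    have hFc : Continuous F := by
      apply Continuous.smul (δψ.continuous.comp Circle.exp.continuous)
      exact ((hGc.matrix_mul hAinvc).matrix_mul hGc.matrix_conjTranspose).comp
        Circle.exp.continuous
    have hsub : f1deriv G (Λseq k) δψ - f1deriv G Λ δψ =
        (2 * π)⁻¹ • ∫ θ in (-π)..π, (Fk θ - F θ) := by
      rw [intervalIntegral.integral_sub (hFkc.intervalIntegrable _ _)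
        (hFc.intervalIntegrable _ _), smul_sub]
      rfl
    have hptw : ∀ θ : ℝ, ‖Fk θ - F θ‖ ≤ Gmax ^ 2 * S := by
      intro θ
      set z := Circle.exp θ
      have hfac : Fk θ - F θ = δψ z •
          (G z * (((G z)ᴴ * Λseq k * G z)⁻¹ - ((G z)ᴴ * Λ * G z)⁻¹) * (G z)ᴴ) := by
        rw [hFk, hF]
        simp only [← smul_sub, Matrix.mul_sub, Matrix.sub_mul]
        rfl
      rw [hfac, norm_smul]
      have h1 : ‖δψ z‖ ≤ 1 := le_trans (δψ.norm_coe_le_norm z) hδψ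
      have h2 : ‖G z * (((G z)ᴴ * Λseq k * G z)⁻¹ - ((G z)ᴴ * Λ * G z)⁻¹) * (G z)ᴴ‖ ≤
          Gmax ^ 2 * S := by
        refine le_trans (hGDG z _) ?_
        exact mul_le_mul_of_nonneg_left (hSle z) (by positivity)
      calc ‖δψ z‖ * ‖_‖ ≤ 1 * (Gmax ^ 2 * S) :=
            mul_le_mul h1 h2 (norm_nonneg _) one_pos.le
        _ = Gmax ^ 2 * S := one_mul _
    have hint : ‖∫ θ in (-π)..π, (Fk θ - F θ)‖ ≤ (Gmax ^ 2 * S) * |π - (-π)| :=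
      intervalIntegral.norm_integral_le_of_norm_le_const fun θ _ => hptw θ
    have habs : |π - (-π)| = 2 * π := by
      rw [abs_of_pos (by linarith [pi_pos])]; ring
    rw [hsub, norm_smul]
    have h2π : (0:ℝ) < 2 * π := by linarith [pi_pos]
    calc ‖(2 * π)⁻¹‖ * ‖∫ θ in (-π)..π, (Fk θ - F θ)‖
        ≤ (2 * π)⁻¹ * ((Gmax ^ 2 * S) * (2 * π)) := by
          rw [norm_inv, Real.norm_eq_abs, abs_of_pos h2π]
          exact mul_le_mul_of_nonneg_left (habs ▸ hint) (by positivity)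
      _ = Gmax ^ 2 * S := by field_simp
      _ ≤ (n : ℝ) * Gmax ^ 2 * S := by
          have h1n : (1 : ℝ) ≤ (n : ℝ) := by exact_mod_cast hn
          have := le_mul_of_one_le_left (show (0:ℝ) ≤ Gmax ^ 2 * S by positivity) h1n
          linarith [this]
  refine ⟨part1, ?_⟩
  -- part 2
  set C := ⨆ z : Circle, ‖((G z)ᴴ * Λ * G z)⁻¹‖ with hC
  have hC0 : 0 ≤ C := Real.iSup_nonneg fun z => norm_nonneg _
  have hCbdd : BddAbove (Set.range fun z : Circle => ‖((G z)ᴴ * Λ * G z)⁻¹‖) :=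
    (isCompact_range hAinvc.norm).bddAbove
  have hCle : ∀ z : Circle, ‖((G z)ᴴ * Λ * G z)⁻¹‖ ≤ C := fun z => le_ciSup hCbdd z
  -- key pointwise estimate
  have key : ∀ k, ‖Λseq k - Λ‖ * (Gmax ^ 2 * C) ≤ 1/2 →
      ∀ z : Circle, ‖((G z)ᴴ * Λseq k * G z)⁻¹ - ((G z)ᴴ * Λ * G z)⁻¹‖ ≤
        2 * C ^ 2 * Gmax ^ 2 * ‖Λseq k - Λ‖ := by
    intro k hk z
    set Ak := (G z)ᴴ * Λseq k * G z with hAk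
    set A := (G z)ᴴ * Λ * G z with hA
    have hid : Ak⁻¹ - A⁻¹ = Ak⁻¹ * (A - Ak) * A⁻¹ :=
      inv_sub_inv_eq _ _ ((hdetk k z).isUnit) ((hdet z).isUnit)
    have hAAk : ‖A - Ak‖ ≤ Gmax ^ 2 * ‖Λseq k - Λ‖ := by
      have : A - Ak = (G z)ᴴ * (Λ - Λseq k) * G z := by
        rw [hAk, hA, Matrix.mul_sub, Matrix.sub_mul]
      rw [this]
      calc ‖(G z)ᴴ * (Λ - Λseq k) * G z‖ ≤ ‖(G z)ᴴ * (Λ - Λseq k)‖ * ‖G z‖ :=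
            Matrix.frobenius_norm_mul _ _
        _ ≤ ‖(G z)ᴴ‖ * ‖Λ - Λseq k‖ * ‖G z‖ :=
            mul_le_mul_of_nonneg_right (Matrix.frobenius_norm_mul _ _) (norm_nonneg _)
        _ = ‖G z‖ * ‖G z‖ * ‖Λseq k - Λ‖ := by
            rw [Matrix.frobenius_norm_conjTranspose, norm_sub_rev]; ring
        _ ≤ Gmax ^ 2 * ‖Λseq k - Λ‖ := by
            have hxx : ‖G z‖ * ‖G z‖ ≤ Gmax ^ 2 := by
              rw [pow_two]
              exact mul_le_mul (hGmax z) (hGmax z) (norm_nonneg _) hGm0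
            exact mul_le_mul_of_nonneg_right hxx (norm_nonneg _)
    set d := ‖Ak⁻¹ - A⁻¹‖ with hd
    have hd0 : 0 ≤ d := norm_nonneg _
    have hAkinv : ‖Ak⁻¹‖ ≤ d + C := by
      calc ‖Ak⁻¹‖ = ‖Ak⁻¹ - A⁻¹ + A⁻¹‖ := by rw [sub_add_cancel]
        _ ≤ ‖Ak⁻¹ - A⁻¹‖ + ‖A⁻¹‖ := norm_add_le _ _
        _ ≤ d + C := add_le_add le_rfl (hCle z)
    have hdle : d ≤ (d + C) * (Gmax ^ 2 * ‖Λseq k - Λ‖) * C := by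
      have h6 : ‖Ak⁻¹ * (A - Ak) * A⁻¹‖ ≤ ‖Ak⁻¹‖ * ‖A - Ak‖ * ‖A⁻¹‖ :=
        le_trans (Matrix.frobenius_norm_mul _ _)
          (mul_le_mul_of_nonneg_right (Matrix.frobenius_norm_mul _ _) (norm_nonneg _))
      have h7 : ‖Ak⁻¹‖ * ‖A - Ak‖ * ‖A⁻¹‖ ≤
          (d + C) * (Gmax ^ 2 * ‖Λseq k - Λ‖) * C :=
        mul_le_mul
          (mul_le_mul hAkinv hAAk (norm_nonneg _) (by linarith))
          (hCle z) (norm_nonneg _) (by positivity)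
      calc d = ‖Ak⁻¹ * (A - Ak) * A⁻¹‖ := by rw [hd, hid]
        _ ≤ _ := le_trans h6 h7
    have h8 : d ≤ d * (‖Λseq k - Λ‖ * (Gmax ^ 2 * C)) +
        C ^ 2 * Gmax ^ 2 * ‖Λseq k - Λ‖ := by nlinarith [hdle]
    have h9 : d * (‖Λseq k - Λ‖ * (Gmax ^ 2 * C)) ≤ d * (1/2) :=
      mul_le_mul_of_nonneg_left hk hd0
    linarith
  intro ε hε
  have hN : Tendsto (fun k => ‖Λseq k - Λ‖) atTop (nhds 0) :=
    (tendsto_iff_norm_sub_tendsto_zero).mp hconv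
  have h1 : ∀ᶠ k in atTop, ‖Λseq k - Λ‖ * (Gmax ^ 2 * C) ≤ 1/2 := by
    have := hN.mul_const (Gmax ^ 2 * C)
    rw [zero_mul] at this
    exact this.eventually_le_const (by norm_num)
  have h2 : ∀ᶠ k in atTop,
      (n : ℝ) * Gmax ^ 2 * (2 * C ^ 2 * Gmax ^ 2 * ‖Λseq k - Λ‖) ≤ ε := by
    have := (hN.const_mul (2 * C ^ 2 * Gmax ^ 2)).const_mul ((n : ℝ) * Gmax ^ 2)
    rw [mul_zero, mul_zero] at this
    have h' := this.eventually_le_const hε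
    exact h'
  filter_upwards [h1, h2] with k hk1 hk2 δψ hδψ
  have hSk : (⨆ z : Circle, ‖((G z)ᴴ * Λseq k * G z)⁻¹ - ((G z)ᴴ * Λ * G z)⁻¹‖) ≤
      2 * C ^ 2 * Gmax ^ 2 * ‖Λseq k - Λ‖ :=
    ciSup_le (key k hk1)
  calc ‖f1deriv G (Λseq k) δψ - f1deriv G Λ δψ‖
      ≤ (n : ℝ) * Gmax ^ 2 *
          ⨆ z : Circle, ‖((G z)ᴴ * Λseq k * G z)⁻¹ - ((G z)ᴴ * Λ * G z)⁻¹‖ :=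
        part1 k δψ hδψ
    _ ≤ (n : ℝ) * Gmax ^ 2 * (2 * C ^ 2 * Gmax ^ 2 * ‖Λseq k - Λ‖) :=
        mul_le_mul_of_nonneg_left hSk (by positivity)
    _ ≤ ε := hk2
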